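/- Let V be a finite set and let A, B, C, D₁, D₂ be the edges of a clutter on V where: A, B, C have size d ≥ 3, pairwise intersections of sizes a, b, c with 1 ≤ a,b,c ≤ d−2, A∩B∩C = ∅, every vertex of V is in at least one and at most two of A, B, C; D₁ = (A\(B∪C)) ∪ (B\(A∪C)) ∪ (C\(A∪B)) with |D₁| = d; D₂ = (A∩B) ∪ (B∩C) ∪ (C∩A). Then D₁ ∩ D₂ = ∅ and D₁ ∪ D₂ = V, and for every x ∈ V the contracted family {H\{x} : x ∈ H, H ∈ {A,B,C,D₁,D₂}} is an interval hypergraph on V\{x}. -/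
import Mathlib


/-- A family of subsets of a finite vertex type is an interval hypergraph if some
ordering of the vertices maps every edge to an interval. -/
def IsIntervalHypergraph (V : Type*) [Fintype V] (E : Set (Set V)) : Prop :=
  ∃ f : V ≃ Fin (Fintype.card V),
    ∀ H ∈ E, ∃ i j : Fin (Fintype.card V), ⇑f '' H = Set.Icc i j

lemma key_interval {W : Type*} [Fintype W] (hW : 2 ≤ Fintype.card W) (g : W → ℕ)
    (E : Set (Set W)) (hE : ∀ H ∈ E, ∃ l u : ℕ, H = g ⁻¹' Set.Icc l u) :
    IsIntervalHypergraph W E := by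
  classical
  set n := Fintype.card W with hn
  have hn0 : 0 < n := by omega
  let e : W ≃ Fin n := Fintype.equivFin W
  set cd : W → ℕ := fun w => g w * n + (e w : ℕ) with hcd
  have hmono : ∀ w w', cd w ≤ cd w' → g w ≤ g w' := by
    intro w w' h
    by_contra hlt
    push_neg at hlt
    have h1 : cd w' < cd w := by
      have e1 := (e w').isLt
      calc cd w' = g w' * n + (e w' : ℕ) := rfl
        _ < (g w' + 1) * n := by nlinarith
        _ ≤ g w * n := Nat.mul_le_mul_right n hlt
        _ ≤ cd w := Nat.le_add_right _ _
    omega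
  have hcinj : Function.Injective cd := by
    intro w w' h
    have h1 : g w = g w' := le_antisymm (hmono _ _ h.le) (hmono _ _ h.ge)
    have h2 : (e w : ℕ) = (e w' : ℕ) := by
      have := h
      simp only [hcd] at this
      rw [h1] at this
      omega
    exact e.injective (Fin.ext h2)
  set s : Finset ℕ := Finset.univ.image cd with hs
  have hscard : s.card = n := by
    rw [hs, Finset.card_image_of_injective _ hcinj, Finset.card_univ]
  let oi := s.orderIsoOfFin hscard
  have hmem : ∀ w, cd w ∈ s := fun w => Finset.mem_image_of_mem cd (Finset.mem_univ w)
  let f0 : W → Fin n := fun w => oi.symm ⟨cd w, hmem w⟩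
  have hf0inj : Function.Injective f0 := by
    intro w w' h
    exact hcinj (congrArg Subtype.val (oi.symm.injective h))
  have hbij : Function.Bijective f0 := by
    rw [Fintype.bijective_iff_injective_and_card]
    exact ⟨hf0inj, by simp [hn]⟩
  have hford : ∀ w w', f0 w ≤ f0 w' ↔ cd w ≤ cd w' := by
    intro w w'
    constructor
    · intro h
      have := oi.symm.le_iff_le.mp h
      exact this
    · intro h
      exact oi.symm.le_iff_le.mpr h
  refine ⟨Equiv.ofBijective f0 hbij, ?_⟩
  intro H hH
  obtain ⟨l, u, rfl⟩ := hE H hH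
  rcases Set.eq_empty_or_nonempty (g ⁻¹' Set.Icc l u) with he | hne
  · refine ⟨⟨1, by omega⟩, ⟨0, by omega⟩, ?_⟩
    rw [he, Set.image_empty, Eq.comm, Set.Icc_eq_empty]
    simp [Fin.le_def]
  · obtain ⟨wmin, hwmin, hmin⟩ := Set.exists_min_image _ f0 (Set.toFinite _) hne
    obtain ⟨wmax, hwmax, hmax⟩ := Set.exists_max_image _ f0 (Set.toFinite _) hne
    refine ⟨f0 wmin, f0 wmax, ?_⟩
    ext k
    constructor
    · rintro ⟨w, hw, rfl⟩
      exact Set.mem_Icc.mpr ⟨hmin w hw, hmax w hw⟩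
    · intro hk
      obtain ⟨hk1, hk2⟩ := Set.mem_Icc.mp hk
      set w := (Equiv.ofBijective f0 hbij).symm k with hw
      have hkw : f0 w = k := (Equiv.ofBijective f0 hbij).apply_symm_apply k
      have h1 : g wmin ≤ g w := hmono _ _ ((hford wmin w).mp (by rw [hkw]; exact hk1))
      have h2 : g w ≤ g wmax := hmono _ _ ((hford w wmax).mp (by rw [hkw]; exact hk2))
      have hm1 : l ≤ g wmin := (Set.mem_Icc.mp hwmin).1
      have hm2 : g wmax ≤ u := (Set.mem_Icc.mp hwmax).2
      exact ⟨w, Set.mem_Icc.mpr ⟨le_trans hm1 h1, le_trans h2 hm2⟩, hkw⟩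

lemma case_inner {V : Type*} [Fintype V] [DecidableEq V] (X Y Z D₂ : Set V) (x : V)
    (hsub : 2 ≤ Fintype.card {w : V // w ≠ x})
    (hD2 : ∀ v : V, v ∈ D₂ ↔ (v ∈ X ∧ v ∈ Y) ∨ (v ∈ Y ∧ v ∈ Z) ∨ (v ∈ Z ∧ v ∈ X))
    (E : Set (Set {w : V // w ≠ x}))
    (hE : ∀ H' ∈ E, H' = Subtype.val ⁻¹' X ∨ H' = Subtype.val ⁻¹' Y ∨
      H' = Subtype.val ⁻¹' D₂) :
    IsIntervalHypergraph {w : V // w ≠ x} E := by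
  classical
  refine key_interval hsub
    (fun w => if (w : V) ∈ X then (if (w : V) ∈ Y then 2 else if (w : V) ∈ Z then 1 else 0)
      else if (w : V) ∈ Y then (if (w : V) ∈ Z then 3 else 4) else 5) _ ?_
  intro H' hH'
  rcases hE H' hH' with rfl | rfl | rfl
  · refine ⟨0, 2, ?_⟩
    ext w
    simp only [Set.mem_preimage, Set.mem_Icc]
    split_ifs <;> simp_all
  · refine ⟨2, 4, ?_⟩
    ext w
    simp only [Set.mem_preimage, Set.mem_Icc]
    split_ifs <;> simp_all
  · refine ⟨1, 3, ?_⟩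
    ext w
    simp only [Set.mem_preimage, Set.mem_Icc, hD2]
    split_ifs <;> simp_all

lemma case_outer {V : Type*} [Fintype V] [DecidableEq V] (X Y Z D₁ : Set V) (x : V)
    (hsub : 2 ≤ Fintype.card {w : V // w ≠ x})
    (hD1 : ∀ v : V, v ∈ D₁ ↔ (v ∈ X ∧ v ∉ Y ∧ v ∉ Z) ∨ (v ∈ Y ∧ v ∉ X ∧ v ∉ Z) ∨
      (v ∈ Z ∧ v ∉ X ∧ v ∉ Y))
    (E : Set (Set {w : V // w ≠ x}))
    (hE : ∀ H' ∈ E, H' = Subtype.val ⁻¹' X ∨ H' = Subtype.val ⁻¹' D₁) :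
    IsIntervalHypergraph {w : V // w ≠ x} E := by
  classical
  refine key_interval hsub
    (fun w => if (w : V) ∈ X then (if (w : V) ∈ Y ∨ (w : V) ∈ Z then 0 else 1)
      else if ((w : V) ∈ Y ∧ (w : V) ∉ Z) ∨ ((w : V) ∈ Z ∧ (w : V) ∉ Y) then 2 else 3) _ ?_
  intro H' hH'
  rcases hE H' hH' with rfl | rfl
  · refine ⟨0, 1, ?_⟩
    ext w
    simp only [Set.mem_preimage, Set.mem_Icc]
    split_ifs <;> simp_all
  · refine ⟨1, 2, ?_⟩
    ext w
    simp only [Set.mem_preimage, Set.mem_Icc, hD1]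
    split_ifs <;> simp_all <;> tauto

set_option maxHeartbeats 1000000 in
/-- The clutter `Δ³_{a,b,c}`: the triangle `O_{a,b,c;d}` together with the outer edge
`D₁` (union of private regions) and the inner edge `D₂` (union of pairwise
intersections). Then `D₁, D₂` partition `V` and every single-vertex contraction of the
five-edge clutter is an interval hypergraph. -/
theorem stmt_18 {V : Type*} [Fintype V] [DecidableEq V] {d a b c : ℕ} (hd : 3 ≤ d)
    (A B C D₁ D₂ : Set V)
    (hcardA : A.ncard = d) (hcardB : B.ncard = d) (hcardC : C.ncard = d)
    (ha : (A ∩ B).ncard = a) (hb : (B ∩ C).ncard = b) (hc : (C ∩ A).ncard = c)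
    (ha1 : 1 ≤ a) (ha2 : a ≤ d - 2) (hb1 : 1 ≤ b) (hb2 : b ≤ d - 2)
    (hc1 : 1 ≤ c) (hc2 : c ≤ d - 2)
    (hABC : A ∩ B ∩ C = ∅)
    (hcover : A ∪ B ∪ C = Set.univ)
    (hatmost2 : ∀ v : V, ¬ (v ∈ A ∧ v ∈ B ∧ v ∈ C))
    (hD1 : D₁ = (A \ (B ∪ C)) ∪ (B \ (A ∪ C)) ∪ (C \ (A ∪ B)))
    (hD1card : D₁.ncard = d)
    (hD2 : D₂ = (A ∩ B) ∪ (B ∩ C) ∪ (C ∩ A))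
    (hclutter : ∀ H₁ ∈ ({A, B, C, D₁, D₂} : Set (Set V)),
      ∀ H₂ ∈ ({A, B, C, D₁, D₂} : Set (Set V)), H₁ ≠ H₂ → ¬ H₁ ⊆ H₂) :
    D₁ ∩ D₂ = ∅ ∧ D₁ ∪ D₂ = Set.univ ∧
      ∀ x : V, IsIntervalHypergraph {w : V // w ≠ x}
        {H' : Set {w : V // w ≠ x} | ∃ H ∈ ({A, B, C, D₁, D₂} : Set (Set V)),
          x ∈ H ∧ H' = (Subtype.val ⁻¹' H)} := by
  classical
  have hD1' : ∀ v : V, v ∈ D₁ ↔ (v ∈ A ∧ v ∉ B ∧ v ∉ C) ∨ (v ∈ B ∧ v ∉ A ∧ v ∉ C) ∨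
      (v ∈ C ∧ v ∉ A ∧ v ∉ B) := by
    intro v
    simp only [hD1, Set.mem_union, Set.mem_diff]
    tauto
  have hD2' : ∀ v : V, v ∈ D₂ ↔ (v ∈ A ∧ v ∈ B) ∨ (v ∈ B ∧ v ∈ C) ∨ (v ∈ C ∧ v ∈ A) := by
    intro v
    simp only [hD2, Set.mem_union, Set.mem_inter_iff]
    tauto
  have hV3 : 3 ≤ Fintype.card V := by
    have h1 := Set.ncard_le_ncard (Set.subset_univ D₁) Set.finite_univ
    rw [Set.ncard_univ, Nat.card_eq_fintype_card] at h1
    omega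
  refine ⟨?_, ?_, ?_⟩
  · ext v
    simp only [Set.mem_inter_iff, hD1' v, hD2' v, Set.mem_empty_iff_false, iff_false]
    tauto
  · ext v
    have hv : v ∈ A ∪ B ∪ C := by rw [hcover]; trivial
    simp only [Set.mem_union] at hv
    simp only [Set.mem_union, hD1' v, hD2' v, Set.mem_univ, iff_true]
    tauto
  · intro x
    have hsub : 2 ≤ Fintype.card {w : V // w ≠ x} := by
      have h2 : Fintype.card {w : V // w ≠ x} = Fintype.card V - 1 := by
        have h3 := Fintype.card_subtype_compl (fun w : V => w = x)
        simp only [Fintype.card_subtype_eq] at h3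
        exact h3
      omega
    have hx : x ∈ A ∪ B ∪ C := by rw [hcover]; trivial
    simp only [Set.mem_union] at hx
    by_cases xA : x ∈ A <;> by_cases xB : x ∈ B <;> by_cases xC : x ∈ C
    -- TTT
    · exact absurd ⟨xA, xB, xC⟩ (hatmost2 x)
    -- TTF : x ∈ A ∩ B
    · refine case_inner A B C D₂ x hsub hD2' _ ?_
      rintro H' ⟨H, hH, hxH, rfl⟩
      have hxD1 : x ∉ D₁ := by rw [hD1' x]; tauto
      simp only [Set.mem_insert_iff, Set.mem_singleton_iff] at hH
      rcases hH with rfl | rfl | rfl | rfl | rfl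
      · exact Or.inl rfl
      · exact Or.inr (Or.inl rfl)
      · exact absurd hxH xC
      · exact absurd hxH hxD1
      · exact Or.inr (Or.inr rfl)
    -- TFT : x ∈ C ∩ A
    · refine case_inner C A B D₂ x hsub ?_ _ ?_
      · intro v
        rw [hD2' v]
        tauto
      rintro H' ⟨H, hH, hxH, rfl⟩
      have hxD1 : x ∉ D₁ := by rw [hD1' x]; tauto
      simp only [Set.mem_insert_iff, Set.mem_singleton_iff] at hH
      rcases hH with rfl | rfl | rfl | rfl | rfl
      · exact Or.inr (Or.inl rfl)
      · exact absurd hxH xB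
      · exact Or.inl rfl
      · exact absurd hxH hxD1
      · exact Or.inr (Or.inr rfl)
    -- TFF : x ∈ A only
    · refine case_outer A B C D₁ x hsub hD1' _ ?_
      rintro H' ⟨H, hH, hxH, rfl⟩
      have hxD2 : x ∉ D₂ := by rw [hD2' x]; tauto
      simp only [Set.mem_insert_iff, Set.mem_singleton_iff] at hH
      rcases hH with rfl | rfl | rfl | rfl | rfl
      · exact Or.inl rfl
      · exact absurd hxH xB
      · exact absurd hxH xC
      · exact Or.inr rfl
      · exact absurd hxH hxD2
    -- FTT : x ∈ B ∩ C
    · refine case_inner B C A D₂ x hsub ?_ _ ?_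
      · intro v
        rw [hD2' v]
        tauto
      rintro H' ⟨H, hH, hxH, rfl⟩
      have hxD1 : x ∉ D₁ := by rw [hD1' x]; tauto
      simp only [Set.mem_insert_iff, Set.mem_singleton_iff] at hH
      rcases hH with rfl | rfl | rfl | rfl | rfl
      · exact absurd hxH xA
      · exact Or.inl rfl
      · exact Or.inr (Or.inl rfl)
      · exact absurd hxH hxD1
      · exact Or.inr (Or.inr rfl)
    -- FTF : x ∈ B only
    · refine case_outer B A C D₁ x hsub ?_ _ ?_
      · intro v
        rw [hD1' v]
        tauto
      rintro H' ⟨H, hH, hxH, rfl⟩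
      have hxD2 : x ∉ D₂ := by rw [hD2' x]; tauto
      simp only [Set.mem_insert_iff, Set.mem_singleton_iff] at hH
      rcases hH with rfl | rfl | rfl | rfl | rfl
      · exact absurd hxH xA
      · exact Or.inl rfl
      · exact absurd hxH xC
      · exact Or.inr rfl
      · exact absurd hxH hxD2
    -- FFT : x ∈ C only
    · refine case_outer C A B D₁ x hsub ?_ _ ?_
      · intro v
        rw [hD1' v]
        tauto
      rintro H' ⟨H, hH, hxH, rfl⟩
      have hxD2 : x ∉ D₂ := by rw [hD2' x]; tauto
      simp only [Set.mem_insert_iff, Set.mem_singleton_iff] at hH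
      rcases hH with rfl | rfl | rfl | rfl | rfl
      · exact absurd hxH xA
      · exact absurd hxH xB
      · exact Or.inl rfl
      · exact Or.inr rfl
      · exact absurd hxH hxD2
    -- FFF
    · tauto
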